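/- Under the standing assumptions, for every β with 0 ≤ β ≤ 1 one has D(β) > 0, L1(β) > 0, and L2(β) > 0. -/

import Mathlib

/-- Under the standing assumptions, for every β with 0 ≤ β ≤ 1 one has
D(β) > 0, L1(β) > 0, and L2(β) > 0. -/
theorem stmt_0 (t v α δ : ℝ) (ht : 0 < t) (hδ : 0 < δ) (hδα : δ < α) (hα : α < 1)
    (hv1 : t * (α / ((2 - α) * δ) + 1 / 2) < v) (hv2 : v < 2 * t)
    (β : ℝ) (hβ0 : 0 ≤ β) (hβ1 : β ≤ 1) :
    0 < 2 * (α + δ) - 3 * α * δ - 2 * β * (α - δ) ∧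
    0 < α * δ * (t - 2 * v) + v * (α + δ) - β * (α - δ) * (v - t) ∧
    0 < v * (α + δ) - α * δ * (t + v) - β * (α - δ) * (t + v) := by
  have hd : 0 < (2 - α) * δ := by nlinarith
  have hv1' : t * α + t / 2 * ((2 - α) * δ) < v * ((2 - α) * δ) := by
    have h := hv1
    rw [show t * (α / ((2 - α) * δ) + 1 / 2)
        = (t * α + t / 2 * ((2 - α) * δ)) / ((2 - α) * δ) by
      field_simp [left_ne_zero_of_mul hd.ne', right_ne_zero_of_mul hd.ne']] at h
    exact (div_lt_iff₀ hd).mp h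
  have hvt : t < v := by nlinarith [mul_pos ht hδ, mul_pos ht (sub_pos.mpr hδα)]
  have hv0 : 0 < v := ht.trans hvt
  refine ⟨by nlinarith, by nlinarith [mul_nonneg (mul_nonneg (sub_nonneg.mpr hβ1) (sub_pos.mpr hδα).le) (sub_pos.mpr hvt).le], by nlinarith [mul_nonneg (mul_nonneg (sub_nonneg.mpr hβ1) (sub_pos.mpr hδα).le) (by linarith : (0:ℝ) ≤ t + v), mul_pos ht hδ, mul_pos ht (sub_pos.mpr hδα), mul_pos (mul_pos ht hδ) (by linarith : (0:ℝ) < 1 - α)]⟩
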